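/- If H is a panchromatic pattern and H' is an induced subdigraph of H, then H' is a panchromatic pattern. -/

import Mathlib

/-- A walk in `D` (as a list of at least two vertices) whose sequence of
arc-colours (given by `ς`) forms a walk in `H`. -/
def IsHWalk {V W : Type} (D : V → V → Prop) (H : W → W → Prop) (ς : V → V → W)
    (l : List V) : Prop :=
  2 ≤ l.length ∧ l.Chain' D ∧ ((l.zip l.tail).map fun p => ς p.1 p.2).Chain' H

/-- There is an `H`-walk in `D` from `a` to `b`. -/
def HReach {V W : Type} (D : V → V → Prop) (H : W → W → Prop) (ς : V → V → W)
    (a b : V) : Prop :=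
  ∃ l : List V, IsHWalk D H ς l ∧ l.head? = some a ∧ l.getLast? = some b

/-- `K` is an `H`-kernel of the `H`-coloured digraph `D`: it is `H`-independent
and `H`-absorbent. -/
def IsHKernel {V W : Type} (D : V → V → Prop) (H : W → W → Prop) (ς : V → V → W)
    (K : Set V) : Prop :=
  (∀ a ∈ K, ∀ b ∈ K, a ≠ b → ¬ HReach D H ς a b) ∧
  (∀ v, v ∉ K → ∃ b ∈ K, HReach D H ς v b)

/-- `H` is a panchromatic pattern: every digraph with every `H`-colouring
admits an `H`-kernel. -/
def IsPanchromatic {W : Type} (H : W → W → Prop) : Prop :=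
  ∀ (V : Type) (D : V → V → Prop) (ς : V → V → W), ∃ K : Set V, IsHKernel D H ς K

/-- `H` is bicomplete: the vertex set splits as `X ⊔ Xᶜ`, both parts induce
complete digraphs (with loops), and all arcs from `Xᶜ` to `X` are present. -/
def IsBicomplete {W : Type} (H : W → W → Prop) : Prop :=
  ∃ X : Set W, (∀ a ∈ X, ∀ b ∈ X, H a b) ∧ (∀ a ∉ X, ∀ b ∉ X, H a b) ∧
    (∀ x ∈ X, ∀ y ∉ X, H y x)

/-- `H` is an expansion of `2K₁`: two nonempty classes, each inducing a
complete looped digraph, with no arcs between them. -/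
def IsExpansion2K1 {W : Type} (H : W → W → Prop) : Prop :=
  ∃ C : Set W, C.Nonempty ∧ Cᶜ.Nonempty ∧
    (∀ a ∈ C, ∀ b ∈ C, H a b) ∧ (∀ a ∈ Cᶜ, ∀ b ∈ Cᶜ, H a b) ∧
    (∀ a b, (a ∈ C ∧ b ∈ Cᶜ) ∨ (a ∈ Cᶜ ∧ b ∈ C) → ¬ H a b)

/-- If `H` is panchromatic and `H'` is an induced subdigraph of `H`
(on a vertex subset `S`), then `H'` is panchromatic. -/
theorem stmt1 {W : Type} (H : W → W → Prop) (S : Set W)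
    (hH : IsPanchromatic H) :
    IsPanchromatic (fun a b : S => H a.1 b.1) := by
  intro V D ς
  obtain ⟨K, hK1, hK2⟩ := hH V D (fun a b => (ς a b).1)
  have key : ∀ a b, HReach D H (fun a b => (ς a b).1) a b ↔
      HReach D (fun a b : S => H a.1 b.1) ς a b := by
    intro a b
    have hwalk : ∀ l : List V, IsHWalk D H (fun a b => (ς a b).1) l ↔
        IsHWalk D (fun a b : S => H a.1 b.1) ς l := by
      intro l
      unfold IsHWalk
      have : ((l.zip l.tail).map fun p => (ς p.1 p.2).1) =
          ((l.zip l.tail).map fun p => ς p.1 p.2).map Subtype.val := by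
        simp [List.map_map, Function.comp]
      unfold List.Chain'
      rw [this, List.isChain_map]
    constructor <;> rintro ⟨l, hl, h1, h2⟩
    · exact ⟨l, (hwalk l).mp hl, h1, h2⟩
    · exact ⟨l, (hwalk l).mpr hl, h1, h2⟩
  refine ⟨K, fun a ha b hb hab h => hK1 a ha b hb hab ((key a b).mpr h),
    fun v hv => ?_⟩
  obtain ⟨b, hb, hr⟩ := hK2 v hv
  exact ⟨b, hb, (key v b).mp hr⟩
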